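/- Let V and W be Banach spaces over 𝕜 ∈ {ℝ, ℂ}. Let {e^j}_{j∈ℕ} be a countable subset of the continuous dual V* whose span is dense in V*, and let {f_k}_{k∈ℕ} be a countable subset of W whose span is dense in W. Then the linear span of the rank-one operators e^j ⊗ f_k (where (e^j ⊗ f_k)(v) := e^j(v)·f_k for v ∈ V) is dense, with respect to the operator norm, in the space F(V,W) of finite-rank operators, i.e., of continuous linear operators from V to W whose range is finite-dimensional. -/

import Mathlib

lemma smulRight_mem_span_pairs
    {𝕜 V W : Type*} [RCLike 𝕜]
    [NormedAddCommGroup V] [NormedSpace 𝕜 V]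
    [NormedAddCommGroup W] [NormedSpace 𝕜 W]
    (e : ℕ → (V →L[𝕜] 𝕜)) (f : ℕ → W)
    {φ : V →L[𝕜] 𝕜} (hφ : φ ∈ Submodule.span 𝕜 (Set.range e))
    {w : W} (hw : w ∈ Submodule.span 𝕜 (Set.range f)) :
    φ.smulRight w ∈ Submodule.span 𝕜
      (Set.range fun p : ℕ × ℕ => (e p.1).smulRight (f p.2)) := by
  have key : ∀ w ∈ Submodule.span 𝕜 (Set.range f), ∀ φ ∈ Submodule.span 𝕜 (Set.range e),
      φ.smulRight w ∈ Submodule.span 𝕜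
        (Set.range fun p : ℕ × ℕ => (e p.1).smulRight (f p.2)) := by
    intro w hw
    induction hw using Submodule.span_induction with
    | mem w hwmem =>
      intro φ hφ
      induction hφ using Submodule.span_induction with
      | mem φ hφmem =>
        obtain ⟨j, rfl⟩ := hφmem
        obtain ⟨k, rfl⟩ := hwmem
        exact Submodule.subset_span ⟨(j, k), rfl⟩
      | zero =>
        have : (0 : V →L[𝕜] 𝕜).smulRight w = 0 := by ext v; simp
        rw [this]; exact Submodule.zero_mem _
      | add φ ψ _ _ h1 h2 =>
        have : (φ + ψ).smulRight w = φ.smulRight w + ψ.smulRight w := by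
          ext v; simp [add_smul]
        rw [this]; exact Submodule.add_mem _ h1 h2
      | smul c φ _ h1 =>
        have : (c • φ).smulRight w = c • φ.smulRight w := by
          ext v; simp [smul_smul]
        rw [this]; exact Submodule.smul_mem _ _ h1
    | zero =>
      intro φ hφ
      have : φ.smulRight (0 : W) = 0 := by ext v; simp
      rw [this]; exact Submodule.zero_mem _
    | add w w' _ _ h1 h2 =>
      intro φ hφ
      have : φ.smulRight (w + w') = φ.smulRight w + φ.smulRight w' := by
        ext v; simp [smul_add]
      rw [this]; exact Submodule.add_mem _ (h1 φ hφ) (h2 φ hφ)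
    | smul c w _ h1 =>
      intro φ hφ
      have : φ.smulRight (c • w) = c • φ.smulRight w := by
        ext v
        simp only [ContinuousLinearMap.smulRight_apply, ContinuousLinearMap.smul_apply]
        rw [smul_comm]
      rw [this]; exact Submodule.smul_mem _ _ (h1 φ hφ)
  exact key w hw φ hφ

/-- Let `V`, `W` be Banach spaces, `{e^j}` a countable family in the
continuous dual `V*` with dense span, and `{f_k}` a countable family in `W` with dense span.
Then the span of the rank-one operators `e^j ⊗ f_k : v ↦ e^j(v) • f_k` is dense (in operator
norm) in the space of finite-rank continuous linear operators from `V` to `W`. -/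
theorem span_rankOne_dense_in_finiteRank
    {𝕜 V W : Type*} [RCLike 𝕜]
    [NormedAddCommGroup V] [NormedSpace 𝕜 V] [CompleteSpace V]
    [NormedAddCommGroup W] [NormedSpace 𝕜 W] [CompleteSpace W]
    (e : ℕ → (V →L[𝕜] 𝕜))
    (he : Dense (↑(Submodule.span 𝕜 (Set.range e)) : Set (V →L[𝕜] 𝕜)))
    (f : ℕ → W)
    (hf : Dense (↑(Submodule.span 𝕜 (Set.range f)) : Set W)) :
    ∀ T : V →L[𝕜] W, FiniteDimensional 𝕜 (LinearMap.range (T : V →ₗ[𝕜] W)) →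
      T ∈ closure (↑(Submodule.span 𝕜
        (Set.range fun p : ℕ × ℕ => (e p.1).smulRight (f p.2))) : Set (V →L[𝕜] W)) := by
  intro T hT
  set R := LinearMap.range (T : V →ₗ[𝕜] W) with hR
  haveI : FiniteDimensional 𝕜 R := hT
  let b := Module.finBasis 𝕜 R
  let T' : V →L[𝕜] R := T.codRestrict R (fun v => LinearMap.mem_range_self _ v)
  let φ : Fin (Module.finrank 𝕜 R) → (V →L[𝕜] 𝕜) := fun i =>
    (LinearMap.toContinuousLinearMap (b.coord i)).comp T'
  have hTeq : T = ∑ i, (φ i).smulRight ((b i : W)) := by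
    ext v
    have hb := b.sum_repr (T' v)
    have : ((T' v : R) : W) = ∑ i, b.repr (T' v) i • ((b i : W)) := by
      conv_lhs => rw [← hb]
      push_cast
      rfl
    simpa [φ, T', ContinuousLinearMap.sum_apply, Module.Basis.coord_apply] using this
  -- each rank-one piece is in the closure of the span of pairs
  have hpiece : ∀ i, (φ i).smulRight ((b i : W)) ∈ closure (↑(Submodule.span 𝕜
      (Set.range fun p : ℕ × ℕ => (e p.1).smulRight (f p.2))) : Set (V →L[𝕜] W)) := by
    intro i
    have hcont : Continuous (Function.uncurry (fun (a : V →L[𝕜] 𝕜) (c : W) =>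
        (ContinuousLinearMap.smulRightL 𝕜 V W a) c)) :=
      (ContinuousLinearMap.smulRightL 𝕜 V W).continuous₂
    have hφi : (φ i) ∈ closure (↑(Submodule.span 𝕜 (Set.range e)) : Set (V →L[𝕜] 𝕜)) := by
      rw [he.closure_eq]; trivial
    have hbi : ((b i : W)) ∈ closure (↑(Submodule.span 𝕜 (Set.range f)) : Set W) := by
      rw [hf.closure_eq]; trivial
    have := map_mem_closure₂ hcont hφi hbi (fun a ha c hc =>
      smulRight_mem_span_pairs e f ha hc)
    simpa using this
  -- closure of a submodule is a submodule; conclude by summing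
  rw [hTeq]
  have hclos : (↑((Submodule.span 𝕜
      (Set.range fun p : ℕ × ℕ => (e p.1).smulRight (f p.2))).topologicalClosure) :
      Set (V →L[𝕜] W)) = closure (↑(Submodule.span 𝕜
      (Set.range fun p : ℕ × ℕ => (e p.1).smulRight (f p.2))) : Set (V →L[𝕜] W)) := rfl
  rw [← hclos]
  exact Submodule.sum_mem _ (fun i _ => by rw [← hclos] at hpiece; exact hpiece i)
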